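/- Let S be a commutative ring and B = S[X]. If an ideal I ⊆ B satisfies D(I) ⊆ I for every S-linear differential operator D on B (equivalently Δ^α(I) ⊆ I for all α ≥ 0, where Δ^α are the Hasse–Schmidt derivatives), then I is generated by elements of S, i.e. I = (I ∩ S)·B. -/

import Mathlib

open Polynomial

lemma hasseDeriv_natDegree_eq_C {S : Type*} [CommRing S] (f : Polynomial S) :
    hasseDeriv f.natDegree f = C (f.coeff f.natDegree) := by
  ext m
  rw [hasseDeriv_coeff, coeff_C]
  rcases Nat.eq_zero_or_pos m with hm | hm
  · subst hm; simp
  · have : f.natDegree < m + f.natDegree := by omega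
    rw [coeff_eq_zero_of_natDegree_lt this]
    simp [hm.ne']

/-- An ideal of `B = S[X]` stable under all Hasse–Schmidt derivatives (equivalently,
under all `S`-linear differential operators) is generated by its elements from `S`,
i.e. `I = (I ∩ S)·B`. -/
theorem stmt_6 (S : Type*) [CommRing S] (I : Ideal (Polynomial S))
    (hstab : ∀ (α : ℕ), ∀ f ∈ I, hasseDeriv α f ∈ I) :
    I = Ideal.map (C : S →+* Polynomial S)
          (Ideal.comap (C : S →+* Polynomial S) I) := by
  refine le_antisymm ?_ Ideal.map_comap_le
  have key : ∀ n : ℕ, ∀ f ∈ I, f.natDegree ≤ n →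
      f ∈ Ideal.map (C : S →+* Polynomial S) (Ideal.comap (C : S →+* Polynomial S) I) := by
    intro n
    induction n with
    | zero =>
      intro f hf hdeg
      have hf0 : f = C (f.coeff 0) := (Polynomial.eq_C_of_natDegree_le_zero hdeg)
      have : f.coeff 0 ∈ Ideal.comap (C : S →+* Polynomial S) I := by
        simpa [Ideal.mem_comap, ← hf0] using hf
      rw [hf0]
      exact Ideal.mem_map_of_mem _ this
    | succ n ih =>
      intro f hf hdeg
      rcases Nat.lt_or_ge f.natDegree (n + 1) with h | h
      · exact ih f hf (Nat.lt_succ_iff.mp h)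
      have hdeq : f.natDegree = n + 1 := le_antisymm hdeg h
      have hC : C (f.coeff f.natDegree) ∈ I := by
        rw [← _root_.hasseDeriv_natDegree_eq_C]
        exact hstab _ f hf
      have hlead : f.coeff f.natDegree ∈ Ideal.comap (C : S →+* Polynomial S) I := hC
      have hmon : (C (f.coeff f.natDegree)) * X ^ f.natDegree ∈
          Ideal.map (C : S →+* Polynomial S) (Ideal.comap (C : S →+* Polynomial S) I) :=
        Ideal.mul_mem_right _ _ (Ideal.mem_map_of_mem _ hlead)
      have herase : f - C (f.coeff f.natDegree) * X ^ f.natDegree ∈ I :=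
        I.sub_mem hf (Ideal.mul_mem_right _ _ hC)
      have hdeg' : (f - C (f.coeff f.natDegree) * X ^ f.natDegree).natDegree ≤ n := by
        rw [show f.coeff f.natDegree = f.leadingCoeff from rfl,
          Polynomial.self_sub_C_mul_X_pow]
        have := Polynomial.eraseLead_natDegree_le f
        omega
      have := ih _ herase hdeg'
      have : f ∈ Ideal.map (C : S →+* Polynomial S) (Ideal.comap (C : S →+* Polynomial S) I) := by
        have hsum := Ideal.add_mem _ this hmon
        simpa using hsum
      exact this
  intro f hf
  exact key f.natDegree f hf le_rfl
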